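/- Block encoding of the two-dimensional discrete gradient: on ℂ² ⊗ ℂ² ⊗ ℂ^{N²} (qubits ordered ℓ, k, then the system register indexed by Fin N × Fin N with components (j⁽¹⁾, j⁽⁰⁾)) define C₀ = P₀ ⊗ P₀ ⊗ (I_N ⊗ S₋) + (I₄ − P₀ ⊗ P₀) ⊗ I_{N²}, C₁ = P₁ ⊗ P₀ ⊗ (I_N ⊗ S₊) + (I₄ − P₁ ⊗ P₀) ⊗ I_{N²}, C₂ = P₀ ⊗ P₁ ⊗ (S₋ ⊗ I_N) + (I₄ − P₀ ⊗ P₁) ⊗ I_{N²}, C₃ = P₁ ⊗ P₁ ⊗ (S₊ ⊗ I_N) + (I₄ − P₁ ⊗ P₁) ⊗ I_{N²}, and U = (H ⊗ I₂ ⊗ I_{N²}) · C₃ · C₂ · C₁ · C₀ · ((Z·H) ⊗ H ⊗ I_{N²}). Then U block-encodes the discrete gradient with sub-normalization factor 1/√2: for each a ∈ Fin 2 and all r, c ∈ Fin N × Fin N, U((0,a,r),(0,0,c)) = (1/√2)·(D̃⁽ᵃ⁾)_{rc}, where D̃⁽⁰⁾ = I_N ⊗ D̃₁, D̃⁽¹⁾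 = D̃₁ ⊗ I_N, and D̃₁ = (1/2)(S₋ − S₊). -/
import Mathlib

open Matrix Kronecker

noncomputable section

/-- Cyclic shift matrix `S₊`: `(S₊)_{jk} = 1` iff `j ≡ k+1 (mod N)`. -/
def Sp (N : ℕ) [NeZero N] : Matrix (Fin N) (Fin N) ℂ :=
  Matrix.of fun j k => if j = k + 1 then 1 else 0

/-- Cyclic shift matrix `S₋ = S₊ᵀ`. -/
def Sm (N : ℕ) [NeZero N] : Matrix (Fin N) (Fin N) ℂ := (Sp N)ᵀ

def P0 : Matrix (Fin 2) (Fin 2) ℂ := !![1, 0; 0, 0]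
def P1 : Matrix (Fin 2) (Fin 2) ℂ := !![0, 0; 0, 1]
def Hg : Matrix (Fin 2) (Fin 2) ℂ := ((Real.sqrt 2 : ℝ) : ℂ)⁻¹ • !![1, 1; 1, -1]
def Zg : Matrix (Fin 2) (Fin 2) ℂ := !![1, 0; 0, -1]

/-- `D̃₁ = (1/2)(S₋ − S₊)`, the scaled central finite-difference approximation of `d/dx`. -/
def Dt1 (N : ℕ) [NeZero N] : Matrix (Fin N) (Fin N) ℂ :=
  (1 / 2 : ℂ) • (Sm N - Sp N)

lemma hP00 : P0 * P0 = P0 := by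
  ext i j; fin_cases i <;> fin_cases j <;> simp [P0, Matrix.mul_apply, Fin.sum_univ_two]
lemma hP01 : P0 * P1 = 0 := by
  ext i j; fin_cases i <;> fin_cases j <;> simp [P0, P1, Matrix.mul_apply, Fin.sum_univ_two]
lemma hP10 : P1 * P0 = 0 := by
  ext i j; fin_cases i <;> fin_cases j <;> simp [P0, P1, Matrix.mul_apply, Fin.sum_univ_two]
lemma hP11 : P1 * P1 = P1 := by
  ext i j; fin_cases i <;> fin_cases j <;> simp [P1, Matrix.mul_apply, Fin.sum_univ_two]
lemma hP0add : P0 + P1 = 1 := by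
  ext i j; fin_cases i <;> fin_cases j <;> simp [P0, P1, Matrix.one_apply]

lemma hHP00 : Hg * P0 * P0 = Hg * P0 := by rw [mul_assoc, hP00]
lemma hHP01 : Hg * P0 * P1 = 0 := by rw [mul_assoc, hP01, mul_zero]
lemma hHP10 : Hg * P1 * P0 = 0 := by rw [mul_assoc, hP10, mul_zero]
lemma hHP11 : Hg * P1 * P1 = Hg * P1 := by rw [mul_assoc, hP11]

lemma sinv : ((Real.sqrt 2 : ℝ) : ℂ)⁻¹ * ((Real.sqrt 2 : ℝ) : ℂ)⁻¹ = (1/2 : ℂ) := by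
  have h : ((Real.sqrt 2 : ℝ) : ℂ) * ((Real.sqrt 2 : ℝ) : ℂ) = 2 := by
    norm_cast
    rw [Real.mul_self_sqrt (by norm_num)]
  rw [← mul_inv, h]
  norm_num

lemma a00 : (Hg * P0 * (Zg * Hg)) 0 0 = 1/2 := by
  simp [Hg, Zg, P0, Matrix.mul_apply, Fin.sum_univ_two, Matrix.smul_apply, smul_eq_mul]
  linear_combination sinv

lemma a10 : (Hg * P1 * (Zg * Hg)) 0 0 = -(1/2) := by
  simp [Hg, Zg, P1, Matrix.mul_apply, Fin.sum_univ_two, Matrix.smul_apply, smul_eq_mul]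
  linear_combination sinv

lemma b00 : (P0 * Hg) 0 0 = ((Real.sqrt 2 : ℝ) : ℂ)⁻¹ := by
  simp [Hg, P0, Matrix.mul_apply, Fin.sum_univ_two, Matrix.smul_apply, smul_eq_mul]

lemma b01 : (P0 * Hg) 1 0 = 0 := by
  simp [Hg, P0, Matrix.mul_apply, Fin.sum_univ_two, Matrix.smul_apply, smul_eq_mul]

lemma b10 : (P1 * Hg) 0 0 = 0 := by
  simp [Hg, P1, Matrix.mul_apply, Fin.sum_univ_two, Matrix.smul_apply, smul_eq_mul]

lemma b11 : (P1 * Hg) 1 0 = ((Real.sqrt 2 : ℝ) : ℂ)⁻¹ := by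
  simp [Hg, P1, Matrix.mul_apply, Fin.sum_univ_two, Matrix.smul_apply, smul_eq_mul]

theorem stmt_14 (n : ℕ) (hn : 1 ≤ n) (N : ℕ) (hN : N = 2 ^ n) [NeZero N]
    (C0 C1 C2 C3 U : Matrix ((Fin 2 × Fin 2) × (Fin N × Fin N)) ((Fin 2 × Fin 2) × (Fin N × Fin N)) ℂ)
    (hC0 : C0 = P0 ⊗ₖ P0 ⊗ₖ ((1 : Matrix (Fin N) (Fin N) ℂ) ⊗ₖ Sm N)
      + ((1 : Matrix (Fin 2 × Fin 2) (Fin 2 × Fin 2) ℂ) - P0 ⊗ₖ P0)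
          ⊗ₖ (1 : Matrix (Fin N × Fin N) (Fin N × Fin N) ℂ))
    (hC1 : C1 = P1 ⊗ₖ P0 ⊗ₖ ((1 : Matrix (Fin N) (Fin N) ℂ) ⊗ₖ Sp N)
      + ((1 : Matrix (Fin 2 × Fin 2) (Fin 2 × Fin 2) ℂ) - P1 ⊗ₖ P0)
          ⊗ₖ (1 : Matrix (Fin N × Fin N) (Fin N × Fin N) ℂ))
    (hC2 : C2 = P0 ⊗ₖ P1 ⊗ₖ (Sm N ⊗ₖ (1 : Matrix (Fin N) (Fin N) ℂ))
      + ((1 : Matrix (Fin 2 × Fin 2) (Fin 2 × Fin 2) ℂ) - P0 ⊗ₖ P1)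
          ⊗ₖ (1 : Matrix (Fin N × Fin N) (Fin N × Fin N) ℂ))
    (hC3 : C3 = P1 ⊗ₖ P1 ⊗ₖ (Sp N ⊗ₖ (1 : Matrix (Fin N) (Fin N) ℂ))
      + ((1 : Matrix (Fin 2 × Fin 2) (Fin 2 × Fin 2) ℂ) - P1 ⊗ₖ P1)
          ⊗ₖ (1 : Matrix (Fin N × Fin N) (Fin N × Fin N) ℂ))
    (hU : U = (Hg ⊗ₖ (1 : Matrix (Fin 2) (Fin 2) ℂ) ⊗ₖ (1 : Matrix (Fin N × Fin N) (Fin N × Fin N) ℂ))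
      * C3 * C2 * C1 * C0
      * ((Zg * Hg) ⊗ₖ Hg ⊗ₖ (1 : Matrix (Fin N × Fin N) (Fin N × Fin N) ℂ))) :
    ∀ r c : Fin N × Fin N,
      U ((0, 0), r) ((0, 0), c)
        = ((Real.sqrt 2 : ℝ) : ℂ)⁻¹ * ((1 : Matrix (Fin N) (Fin N) ℂ) ⊗ₖ Dt1 N) r c ∧
      U ((0, 1), r) ((0, 0), c)
        = ((Real.sqrt 2 : ℝ) : ℂ)⁻¹ * (Dt1 N ⊗ₖ (1 : Matrix (Fin N) (Fin N) ℂ)) r c := by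
  have h1 : (1 : Matrix (Fin 2 × Fin 2) (Fin 2 × Fin 2) ℂ)
      = P0 ⊗ₖ P0 + P0 ⊗ₖ P1 + P1 ⊗ₖ P0 + P1 ⊗ₖ P1 := by
    rw [← Matrix.one_kronecker_one, ← hP0add, Matrix.add_kronecker, Matrix.kronecker_add,
      Matrix.kronecker_add]
    abel
  have hC0' : C0 = (P0 ⊗ₖ P0) ⊗ₖ ((1 : Matrix (Fin N) (Fin N) ℂ) ⊗ₖ Sm N)
      + (P0 ⊗ₖ P1) ⊗ₖ (1 : Matrix (Fin N × Fin N) (Fin N × Fin N) ℂ)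
      + (P1 ⊗ₖ P0) ⊗ₖ (1 : Matrix (Fin N × Fin N) (Fin N × Fin N) ℂ)
      + (P1 ⊗ₖ P1) ⊗ₖ (1 : Matrix (Fin N × Fin N) (Fin N × Fin N) ℂ) := by
    rw [hC0, h1]
    rw [show (P0 ⊗ₖ P0 + P0 ⊗ₖ P1 + P1 ⊗ₖ P0 + P1 ⊗ₖ P1) - P0 ⊗ₖ P0
        = P0 ⊗ₖ P1 + P1 ⊗ₖ P0 + P1 ⊗ₖ P1 from by abel]
    rw [Matrix.add_kronecker, Matrix.add_kronecker]
    abel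
  have hC1' : C1 = (P1 ⊗ₖ P0) ⊗ₖ ((1 : Matrix (Fin N) (Fin N) ℂ) ⊗ₖ Sp N)
      + (P0 ⊗ₖ P0) ⊗ₖ (1 : Matrix (Fin N × Fin N) (Fin N × Fin N) ℂ)
      + (P0 ⊗ₖ P1) ⊗ₖ (1 : Matrix (Fin N × Fin N) (Fin N × Fin N) ℂ)
      + (P1 ⊗ₖ P1) ⊗ₖ (1 : Matrix (Fin N × Fin N) (Fin N × Fin N) ℂ) := by
    rw [hC1, h1]
    rw [show (P0 ⊗ₖ P0 + P0 ⊗ₖ P1 + P1 ⊗ₖ P0 + P1 ⊗ₖ P1) - P1 ⊗ₖ P0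
        = P0 ⊗ₖ P0 + P0 ⊗ₖ P1 + P1 ⊗ₖ P1 from by abel]
    rw [Matrix.add_kronecker, Matrix.add_kronecker]
    abel
  have hC2' : C2 = (P0 ⊗ₖ P1) ⊗ₖ (Sm N ⊗ₖ (1 : Matrix (Fin N) (Fin N) ℂ))
      + (P0 ⊗ₖ P0) ⊗ₖ (1 : Matrix (Fin N × Fin N) (Fin N × Fin N) ℂ)
      + (P1 ⊗ₖ P0) ⊗ₖ (1 : Matrix (Fin N × Fin N) (Fin N × Fin N) ℂ)
      + (P1 ⊗ₖ P1) ⊗ₖ (1 : Matrix (Fin N × Fin N) (Fin N × Fin N) ℂ) := by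
    rw [hC2, h1]
    rw [show (P0 ⊗ₖ P0 + P0 ⊗ₖ P1 + P1 ⊗ₖ P0 + P1 ⊗ₖ P1) - P0 ⊗ₖ P1
        = P0 ⊗ₖ P0 + P1 ⊗ₖ P0 + P1 ⊗ₖ P1 from by abel]
    rw [Matrix.add_kronecker, Matrix.add_kronecker]
    abel
  have hC3' : C3 = (P1 ⊗ₖ P1) ⊗ₖ (Sp N ⊗ₖ (1 : Matrix (Fin N) (Fin N) ℂ))
      + (P0 ⊗ₖ P0) ⊗ₖ (1 : Matrix (Fin N × Fin N) (Fin N × Fin N) ℂ)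
      + (P0 ⊗ₖ P1) ⊗ₖ (1 : Matrix (Fin N × Fin N) (Fin N × Fin N) ℂ)
      + (P1 ⊗ₖ P0) ⊗ₖ (1 : Matrix (Fin N × Fin N) (Fin N × Fin N) ℂ) := by
    rw [hC3, h1]
    rw [show (P0 ⊗ₖ P0 + P0 ⊗ₖ P1 + P1 ⊗ₖ P0 + P1 ⊗ₖ P1) - P1 ⊗ₖ P1
        = P0 ⊗ₖ P0 + P0 ⊗ₖ P1 + P1 ⊗ₖ P0 from by abel]
    rw [Matrix.add_kronecker, Matrix.add_kronecker]
    abel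
  set A : Matrix ((Fin 2 × Fin 2) × (Fin N × Fin N)) ((Fin 2 × Fin 2) × (Fin N × Fin N)) ℂ :=
    Hg ⊗ₖ (1 : Matrix (Fin 2) (Fin 2) ℂ) ⊗ₖ (1 : Matrix (Fin N × Fin N) (Fin N × Fin N) ℂ) with hA
  have s3 : A * C3 = ((Hg * P1) ⊗ₖ P1) ⊗ₖ (Sp N ⊗ₖ (1 : Matrix (Fin N) (Fin N) ℂ))
      + ((Hg * P0) ⊗ₖ P0) ⊗ₖ (1 : Matrix (Fin N × Fin N) (Fin N × Fin N) ℂ)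
      + ((Hg * P0) ⊗ₖ P1) ⊗ₖ (1 : Matrix (Fin N × Fin N) (Fin N × Fin N) ℂ)
      + ((Hg * P1) ⊗ₖ P0) ⊗ₖ (1 : Matrix (Fin N × Fin N) (Fin N × Fin N) ℂ) := by
    rw [hA, hC3']
    simp only [Matrix.mul_add, ← Matrix.mul_kronecker_mul, Matrix.one_mul, Matrix.mul_one]
  have s2 : A * C3 * C2 = ((Hg * P0) ⊗ₖ P1) ⊗ₖ (Sm N ⊗ₖ (1 : Matrix (Fin N) (Fin N) ℂ))
      + ((Hg * P1) ⊗ₖ P1) ⊗ₖ (Sp N ⊗ₖ (1 : Matrix (Fin N) (Fin N) ℂ))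
      + ((Hg * P0) ⊗ₖ P0) ⊗ₖ (1 : Matrix (Fin N × Fin N) (Fin N × Fin N) ℂ)
      + ((Hg * P1) ⊗ₖ P0) ⊗ₖ (1 : Matrix (Fin N × Fin N) (Fin N × Fin N) ℂ) := by
    rw [s3, hC2']
    simp only [Matrix.add_mul, Matrix.mul_add, ← Matrix.mul_kronecker_mul,
      hHP00, hHP01, hHP10, hHP11, hP00, hP01, hP10, hP11,
      Matrix.zero_kronecker, Matrix.kronecker_zero, Matrix.one_mul, Matrix.mul_one,
      zero_add, add_zero]
    abel
  have s1 : A * C3 * C2 * C1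
      = ((Hg * P1) ⊗ₖ P0) ⊗ₖ ((1 : Matrix (Fin N) (Fin N) ℂ) ⊗ₖ Sp N)
      + ((Hg * P0) ⊗ₖ P1) ⊗ₖ (Sm N ⊗ₖ (1 : Matrix (Fin N) (Fin N) ℂ))
      + ((Hg * P1) ⊗ₖ P1) ⊗ₖ (Sp N ⊗ₖ (1 : Matrix (Fin N) (Fin N) ℂ))
      + ((Hg * P0) ⊗ₖ P0) ⊗ₖ (1 : Matrix (Fin N × Fin N) (Fin N × Fin N) ℂ) := by
    rw [s2, hC1']
    simp only [Matrix.add_mul, Matrix.mul_add, ← Matrix.mul_kronecker_mul,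
      hHP00, hHP01, hHP10, hHP11, hP00, hP01, hP10, hP11,
      Matrix.zero_kronecker, Matrix.kronecker_zero, Matrix.one_mul, Matrix.mul_one,
      zero_add, add_zero]
    abel
  have s0 : A * C3 * C2 * C1 * C0
      = ((Hg * P0) ⊗ₖ P0) ⊗ₖ ((1 : Matrix (Fin N) (Fin N) ℂ) ⊗ₖ Sm N)
      + ((Hg * P1) ⊗ₖ P0) ⊗ₖ ((1 : Matrix (Fin N) (Fin N) ℂ) ⊗ₖ Sp N)
      + ((Hg * P0) ⊗ₖ P1) ⊗ₖ (Sm N ⊗ₖ (1 : Matrix (Fin N) (Fin N) ℂ))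
      + ((Hg * P1) ⊗ₖ P1) ⊗ₖ (Sp N ⊗ₖ (1 : Matrix (Fin N) (Fin N) ℂ)) := by
    rw [s1, hC0']
    simp only [Matrix.add_mul, Matrix.mul_add, ← Matrix.mul_kronecker_mul,
      hHP00, hHP01, hHP10, hHP11, hP00, hP01, hP10, hP11,
      Matrix.zero_kronecker, Matrix.kronecker_zero, Matrix.one_mul, Matrix.mul_one,
      zero_add, add_zero]
    abel
  have hU' : U
      = ((Hg * P0 * (Zg * Hg)) ⊗ₖ (P0 * Hg)) ⊗ₖ ((1 : Matrix (Fin N) (Fin N) ℂ) ⊗ₖ Sm N)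
      + ((Hg * P1 * (Zg * Hg)) ⊗ₖ (P0 * Hg)) ⊗ₖ ((1 : Matrix (Fin N) (Fin N) ℂ) ⊗ₖ Sp N)
      + ((Hg * P0 * (Zg * Hg)) ⊗ₖ (P1 * Hg)) ⊗ₖ (Sm N ⊗ₖ (1 : Matrix (Fin N) (Fin N) ℂ))
      + ((Hg * P1 * (Zg * Hg)) ⊗ₖ (P1 * Hg)) ⊗ₖ (Sp N ⊗ₖ (1 : Matrix (Fin N) (Fin N) ℂ)) := by
    rw [hU, s0]
    simp only [Matrix.add_mul, ← Matrix.mul_kronecker_mul, Matrix.one_mul, Matrix.mul_one]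
  intro r c
  constructor
  · rw [hU']
    simp only [Matrix.add_apply, Matrix.kroneckerMap_apply, a00, a10, b00, b10,
      Dt1, Matrix.smul_apply, Matrix.sub_apply, smul_eq_mul]
    ring
  · rw [hU']
    simp only [Matrix.add_apply, Matrix.kroneckerMap_apply, a00, a10, b01, b11,
      Dt1, Matrix.smul_apply, Matrix.sub_apply, smul_eq_mul]
    ring
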